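/- For the homogeneous norm ρ on the Heisenberg group, the sub-Laplacian satisfies Δ_H ρ = (Q-1)/ρ · Ψ(η) at every η ≠ 0, where Q = 2N+2 and Ψ(η) = (|x|²+|y|²)/ρ². -/

import Mathlib

open scoped BigOperators
open MeasureTheory

noncomputable section

/-- Points of the Heisenberg group: `(x, y, τ) ∈ ℝ^N × ℝ^N × ℝ`. -/
abbrev H (N : ℕ) := (Fin N → ℝ) × (Fin N → ℝ) × ℝ

/-- The vector field `X_i = ∂_{x_i} + 2 y_i ∂_τ` as a direction at `η`. -/
def XVec {N : ℕ} (i : Fin N) (η : H N) : H N := (Pi.single i 1, 0, 2 * η.2.1 i)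

/-- The vector field `Y_i = ∂_{y_i} - 2 x_i ∂_τ` as a direction at `η`. -/
def YVec {N : ℕ} (i : Fin N) (η : H N) : H N := (0, Pi.single i 1, -(2 * η.1 i))

/-- Derivative of `f` along `X_i`. -/
def Xder {N : ℕ} (i : Fin N) (f : H N → ℝ) (η : H N) : ℝ := fderiv ℝ f η (XVec i η)

/-- Derivative of `f` along `Y_i`. -/
def Yder {N : ℕ} (i : Fin N) (f : H N → ℝ) (η : H N) : ℝ := fderiv ℝ f η (YVec i η)

/-- The sub-Laplacian `Δ_H f = Σ_i (X_i² + Y_i²) f`. -/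
def subLap {N : ℕ} (f : H N → ℝ) (η : H N) : ℝ :=
  ∑ i, (Xder i (Xder i f) η + Yder i (Yder i f) η)

/-- Squared norm of the horizontal gradient `|∇_H f|²`. -/
def hGradSq {N : ℕ} (f : H N → ℝ) (η : H N) : ℝ :=
  ∑ i, ((Xder i f η) ^ 2 + (Yder i f η) ^ 2)

/-- Euclidean squared norm on `ℝ^N`. -/
def sqnorm {N : ℕ} (x : Fin N → ℝ) : ℝ := ∑ i, (x i) ^ 2

/-- The homogeneous norm `|η|_H = ((|x|²+|y|²)² + τ²)^{1/4}`. -/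
def hnorm {N : ℕ} (η : H N) : ℝ :=
  ((sqnorm η.1 + sqnorm η.2.1) ^ 2 + η.2.2 ^ 2) ^ ((1 : ℝ) / 4)

/-- The Heisenberg group law: `heisMul η' η = (x+x', y+y', τ+τ' + 2(x⬝y' - x'⬝y))`. -/
def heisMul {N : ℕ} (a b : H N) : H N :=
  (a.1 + b.1, a.2.1 + b.2.1,
    a.2.2 + b.2.2 + 2 * ((∑ i, b.1 i * a.2.1 i) - (∑ i, a.1 i * b.2.1 i)))

/-- The dilation `δ_λ(x,y,τ) = (λx, λy, λ²τ)`. -/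
def dil {N : ℕ} (l : ℝ) (η : H N) : H N := (l • η.1, l • η.2.1, l ^ 2 * η.2.2)

end

noncomputable section
namespace SubLapAux

variable {N : ℕ}

def p1 (N : ℕ) (i : Fin N) : H N →L[ℝ] ℝ :=
  (ContinuousLinearMap.proj i).comp (ContinuousLinearMap.fst ℝ (Fin N → ℝ) ((Fin N → ℝ) × ℝ))

def p2 (N : ℕ) (i : Fin N) : H N →L[ℝ] ℝ :=
  (ContinuousLinearMap.proj i).comp
    ((ContinuousLinearMap.fst ℝ (Fin N → ℝ) ℝ).comp
      (ContinuousLinearMap.snd ℝ (Fin N → ℝ) ((Fin N → ℝ) × ℝ)))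

def p3 (N : ℕ) : H N →L[ℝ] ℝ :=
  (ContinuousLinearMap.snd ℝ (Fin N → ℝ) ℝ).comp
    (ContinuousLinearMap.snd ℝ (Fin N → ℝ) ((Fin N → ℝ) × ℝ))

@[simp] lemma p1_apply (i : Fin N) (v : H N) : p1 N i v = v.1 i := rfl
@[simp] lemma p2_apply (i : Fin N) (v : H N) : p2 N i v = v.2.1 i := rfl
@[simp] lemma p3_apply (v : H N) : p3 N v = v.2.2 := rfl

def qf (η : H N) : ℝ := sqnorm η.1 + sqnorm η.2.1
def uf (η : H N) : ℝ := qf η ^ 2 + η.2.2 ^ 2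

def Dq (η : H N) : H N →L[ℝ] ℝ :=
  (∑ i, (2 * η.1 i) • p1 N i) + (∑ i, (2 * η.2.1 i) • p2 N i)

def Du (η : H N) : H N →L[ℝ] ℝ := (2 * qf η) • Dq η + (2 * η.2.2) • p3 N

lemma hasFDerivAt_qf (η : H N) : HasFDerivAt qf (Dq η) η := by
  have h1 : ∀ i : Fin N, HasFDerivAt (fun ζ : H N => ζ.1 i ^ 2)
      ((2 * η.1 i) • p1 N i) η := by
    intro i
    have := ((p1 N i).hasFDerivAt (x := η)).fun_mul ((p1 N i).hasFDerivAt (x := η))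
    simpa [pow_two, two_mul, add_smul] using this
  have h2 : ∀ i : Fin N, HasFDerivAt (fun ζ : H N => ζ.2.1 i ^ 2)
      ((2 * η.2.1 i) • p2 N i) η := by
    intro i
    have := ((p2 N i).hasFDerivAt (x := η)).fun_mul ((p2 N i).hasFDerivAt (x := η))
    simpa [pow_two, two_mul, add_smul] using this
  have := (HasFDerivAt.fun_sum (u := Finset.univ) (fun i _ => h1 i)).fun_add (HasFDerivAt.fun_sum (u := Finset.univ) (fun i _ => h2 i))
  exact this

lemma hasFDerivAt_uf (η : H N) : HasFDerivAt uf (Du η) η := by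
  have hq := hasFDerivAt_qf η
  have hq2 : HasFDerivAt (fun ζ : H N => qf ζ ^ 2) ((2 * qf η) • Dq η) η := by
    have := hq.fun_mul hq
    simpa [pow_two, two_mul, add_smul] using this
  have ht : HasFDerivAt (fun ζ : H N => ζ.2.2 ^ 2) ((2 * η.2.2) • p3 N) η := by
    have := ((p3 N).hasFDerivAt (x := η)).fun_mul ((p3 N).hasFDerivAt (x := η))
    simpa [pow_two, two_mul, add_smul] using this
  exact hq2.fun_add ht

lemma uf_nonneg (η : H N) : 0 ≤ uf η := by
  have := sq_nonneg (qf η); have := sq_nonneg η.2.2; unfold uf; linarith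

lemma uf_pos {η : H N} (hη : η ≠ 0) : 0 < uf η := by
  rcases lt_or_eq_of_le (uf_nonneg η) with h | h
  · exact h
  · exfalso
    have h0 : qf η ^ 2 + η.2.2 ^ 2 = 0 := h.symm
    have hq : qf η = 0 := by nlinarith [sq_nonneg (qf η), sq_nonneg η.2.2]
    have ht : η.2.2 = 0 := by nlinarith [sq_nonneg (qf η), sq_nonneg η.2.2]
    have h1 : (0:ℝ) ≤ sqnorm η.1 := Finset.sum_nonneg fun i _ => sq_nonneg _
    have h2 : (0:ℝ) ≤ sqnorm η.2.1 := Finset.sum_nonneg fun i _ => sq_nonneg _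
    have hq' : sqnorm η.1 = 0 ∧ sqnorm η.2.1 = 0 := by
      simp [qf] at hq; constructor <;> linarith
    have hx1 : η.1 = 0 := by
      funext i
      have := (Finset.sum_eq_zero_iff_of_nonneg (fun j _ => sq_nonneg (η.1 j))).1 hq'.1 i (Finset.mem_univ i)
      exact pow_eq_zero_iff (n := 2) (by norm_num) |>.1 this
    have hx2 : η.2.1 = 0 := by
      funext i
      have := (Finset.sum_eq_zero_iff_of_nonneg (fun j _ => sq_nonneg (η.2.1 j))).1 hq'.2 i (Finset.mem_univ i)
      exact pow_eq_zero_iff (n := 2) (by norm_num) |>.1 this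
    exact hη (Prod.ext hx1 (Prod.ext hx2 ht))

end SubLapAux
end

noncomputable section
namespace SubLapAux
variable {N : ℕ}

lemma hasFDerivAt_hnorm {η : H N} (h : uf η ≠ 0) :
    HasFDerivAt hnorm (((1/4 : ℝ) * uf η ^ ((1:ℝ)/4 - 1)) • Du η) η := by
  have := (Real.hasDerivAt_rpow_const (x := uf η) (p := (1:ℝ)/4)
      (Or.inl h)).comp_hasFDerivAt η (hasFDerivAt_uf η)
  exact this

lemma Dq_X (η : H N) (i : Fin N) : Dq η (XVec i η) = 2 * η.1 i := by
  simp [Dq, XVec, Pi.single_apply, mul_ite, Finset.sum_ite_eq']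

lemma Dq_Y (η : H N) (i : Fin N) : Dq η (YVec i η) = 2 * η.2.1 i := by
  simp [Dq, YVec, Pi.single_apply, mul_ite, Finset.sum_ite_eq']

lemma Du_X (η : H N) (i : Fin N) :
    Du η (XVec i η) = 4 * (qf η * η.1 i + η.2.2 * η.2.1 i) := by
  rw [Du, ContinuousLinearMap.add_apply, ContinuousLinearMap.smul_apply,
    ContinuousLinearMap.smul_apply, Dq_X]
  simp [XVec]; ring

lemma Du_Y (η : H N) (i : Fin N) :
    Du η (YVec i η) = 4 * (qf η * η.2.1 i - η.2.2 * η.1 i) := by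
  rw [Du, ContinuousLinearMap.add_apply, ContinuousLinearMap.smul_apply,
    ContinuousLinearMap.smul_apply, Dq_Y]
  simp [YVec]; ring

def XF (i : Fin N) (η : H N) : ℝ :=
  uf η ^ (-(3:ℝ)/4) * (qf η * η.1 i + η.2.2 * η.2.1 i)

def YF (i : Fin N) (η : H N) : ℝ :=
  uf η ^ (-(3:ℝ)/4) * (qf η * η.2.1 i - η.2.2 * η.1 i)

lemma Xder_hnorm {η : H N} (h : uf η ≠ 0) (i : Fin N) :
    Xder i hnorm η = XF i η := by
  rw [Xder, (hasFDerivAt_hnorm h).fderiv]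
  rw [ContinuousLinearMap.smul_apply, Du_X, XF]
  have : ((1:ℝ)/4 - 1) = -(3:ℝ)/4 := by norm_num
  rw [this]; simp; ring

lemma Yder_hnorm {η : H N} (h : uf η ≠ 0) (i : Fin N) :
    Yder i hnorm η = YF i η := by
  rw [Yder, (hasFDerivAt_hnorm h).fderiv]
  rw [ContinuousLinearMap.smul_apply, Du_Y, YF]
  have : ((1:ℝ)/4 - 1) = -(3:ℝ)/4 := by norm_num
  rw [this]; simp; ring

lemma hasFDerivAt_XF {η : H N} (h : uf η ≠ 0) (i : Fin N) :
    HasFDerivAt (XF i)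
      ((uf η ^ (-(3:ℝ)/4)) •
          ((qf η • p1 N i + η.1 i • Dq η) + (η.2.2 • p2 N i + η.2.1 i • p3 N))
        + (qf η * η.1 i + η.2.2 * η.2.1 i) •
            ((-(3:ℝ)/4 * uf η ^ (-(3:ℝ)/4 - 1)) • Du η)) η := by
  have h1 : HasFDerivAt (fun ζ : H N => uf ζ ^ (-(3:ℝ)/4))
      ((-(3:ℝ)/4 * uf η ^ (-(3:ℝ)/4 - 1)) • Du η) η :=
    (Real.hasDerivAt_rpow_const (x := uf η) (p := -(3:ℝ)/4)
      (Or.inl h)).comp_hasFDerivAt η (hasFDerivAt_uf η)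
  have h2 : HasFDerivAt (fun ζ : H N => qf ζ * ζ.1 i + ζ.2.2 * ζ.2.1 i)
      ((qf η • p1 N i + η.1 i • Dq η) + (η.2.2 • p2 N i + η.2.1 i • p3 N)) η := by
    exact ((hasFDerivAt_qf η).mul ((p1 N i).hasFDerivAt (x := η))).add
      (((p3 N).hasFDerivAt (x := η)).mul ((p2 N i).hasFDerivAt (x := η)))
  exact h1.mul h2

lemma hasFDerivAt_YF {η : H N} (h : uf η ≠ 0) (i : Fin N) :
    HasFDerivAt (YF i)
      ((uf η ^ (-(3:ℝ)/4)) •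
          ((qf η • p2 N i + η.2.1 i • Dq η) - (η.2.2 • p1 N i + η.1 i • p3 N))
        + (qf η * η.2.1 i - η.2.2 * η.1 i) •
            ((-(3:ℝ)/4 * uf η ^ (-(3:ℝ)/4 - 1)) • Du η)) η := by
  have h1 : HasFDerivAt (fun ζ : H N => uf ζ ^ (-(3:ℝ)/4))
      ((-(3:ℝ)/4 * uf η ^ (-(3:ℝ)/4 - 1)) • Du η) η :=
    (Real.hasDerivAt_rpow_const (x := uf η) (p := -(3:ℝ)/4)
      (Or.inl h)).comp_hasFDerivAt η (hasFDerivAt_uf η)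
  have h2 : HasFDerivAt (fun ζ : H N => qf ζ * ζ.2.1 i - ζ.2.2 * ζ.1 i)
      ((qf η • p2 N i + η.2.1 i • Dq η) - (η.2.2 • p1 N i + η.1 i • p3 N)) η := by
    exact ((hasFDerivAt_qf η).mul ((p2 N i).hasFDerivAt (x := η))).sub
      (((p3 N).hasFDerivAt (x := η)).mul ((p1 N i).hasFDerivAt (x := η)))
  exact h1.mul h2

lemma continuous_uf : Continuous (uf (N := N)) := by
  unfold uf qf sqnorm
  fun_prop

lemma eventually_ufne {η : H N} (h : uf η ≠ 0) :
    ∀ᶠ ζ in nhds η, uf ζ ≠ 0 :=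
  (continuous_uf.continuousAt).eventually_ne h

lemma Xder2 {η : H N} (h : uf η ≠ 0) (i : Fin N) :
    Xder i (Xder i hnorm) η =
      uf η ^ (-(3:ℝ)/4) * (qf η + 2 * η.1 i ^ 2 + 2 * η.2.1 i ^ 2)
        - 3 * uf η ^ (-(7:ℝ)/4) * (qf η * η.1 i + η.2.2 * η.2.1 i) ^ 2 := by
  have heq : Xder i hnorm =ᶠ[nhds η] XF i :=
    (eventually_ufne h).mono fun ζ hζ => Xder_hnorm hζ i
  rw [Xder, heq.fderiv_eq, (hasFDerivAt_XF h i).fderiv]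
  have e1 : (-(3:ℝ)/4 - 1) = -(7:ℝ)/4 := by norm_num
  simp only [ContinuousLinearMap.add_apply, ContinuousLinearMap.smul_apply,
    ContinuousLinearMap.sub_apply, Du_X, Dq_X, e1, p1_apply, p2_apply, p3_apply,
    smul_eq_mul]
  simp [XVec, Pi.single_apply]
  ring

lemma Yder2 {η : H N} (h : uf η ≠ 0) (i : Fin N) :
    Yder i (Yder i hnorm) η =
      uf η ^ (-(3:ℝ)/4) * (qf η + 2 * η.1 i ^ 2 + 2 * η.2.1 i ^ 2)
        - 3 * uf η ^ (-(7:ℝ)/4) * (qf η * η.2.1 i - η.2.2 * η.1 i) ^ 2 := by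
  have heq : Yder i hnorm =ᶠ[nhds η] YF i :=
    (eventually_ufne h).mono fun ζ hζ => Yder_hnorm hζ i
  rw [Yder, heq.fderiv_eq, (hasFDerivAt_YF h i).fderiv]
  have e1 : (-(3:ℝ)/4 - 1) = -(7:ℝ)/4 := by norm_num
  simp only [ContinuousLinearMap.add_apply, ContinuousLinearMap.smul_apply,
    ContinuousLinearMap.sub_apply, Du_Y, Dq_Y, e1, p1_apply, p2_apply, p3_apply,
    smul_eq_mul]
  simp [YVec, Pi.single_apply]
  ring

end SubLapAux
end

noncomputable section
namespace SubLapAux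
variable {N : ℕ}

lemma key_sum (η : H N) :
    ∑ i, ((qf η * η.1 i + η.2.2 * η.2.1 i) ^ 2
        + (qf η * η.2.1 i - η.2.2 * η.1 i) ^ 2)
      = uf η * qf η := by
  have : ∀ i : Fin N, (qf η * η.1 i + η.2.2 * η.2.1 i) ^ 2
        + (qf η * η.2.1 i - η.2.2 * η.1 i) ^ 2
      = (qf η ^ 2 + η.2.2 ^ 2) * (η.1 i ^ 2 + η.2.1 i ^ 2) := fun i => by ring
  rw [Finset.sum_congr rfl fun i _ => this i, ← Finset.mul_sum]
  have : ∑ i : Fin N, (η.1 i ^ 2 + η.2.1 i ^ 2) = qf η := by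
    rw [Finset.sum_add_distrib]; rfl
  rw [this]; rfl

theorem subLap_hnorm' {N : ℕ} (η : H N) (hη : η ≠ 0) :
    subLap hnorm η =
      ((2 * N + 2 : ℝ) - 1) / hnorm η * ((sqnorm η.1 + sqnorm η.2.1) / (hnorm η) ^ 2) := by
  have hu : 0 < uf η := uf_pos hη
  have hu' : uf η ≠ 0 := hu.ne'
  have hρ : hnorm η = uf η ^ ((1:ℝ)/4) := rfl
  have hρpos : 0 < hnorm η := by rw [hρ]; positivity
  rw [subLap]
  rw [Finset.sum_congr rfl fun i _ => by rw [Xder2 hu' i, Yder2 hu' i]]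
  have expand : ∀ i : Fin N,
      (uf η ^ (-(3:ℝ)/4) * (qf η + 2 * η.1 i ^ 2 + 2 * η.2.1 i ^ 2)
          - 3 * uf η ^ (-(7:ℝ)/4) * (qf η * η.1 i + η.2.2 * η.2.1 i) ^ 2)
        + (uf η ^ (-(3:ℝ)/4) * (qf η + 2 * η.1 i ^ 2 + 2 * η.2.1 i ^ 2)
          - 3 * uf η ^ (-(7:ℝ)/4) * (qf η * η.2.1 i - η.2.2 * η.1 i) ^ 2)
      = (2 * uf η ^ (-(3:ℝ)/4) * qf η + 4 * uf η ^ (-(3:ℝ)/4) * (η.1 i ^ 2 + η.2.1 i ^ 2))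
        - 3 * uf η ^ (-(7:ℝ)/4) * ((qf η * η.1 i + η.2.2 * η.2.1 i) ^ 2
            + (qf η * η.2.1 i - η.2.2 * η.1 i) ^ 2) := fun i => by ring
  rw [Finset.sum_congr rfl fun i _ => expand i]
  rw [Finset.sum_sub_distrib, Finset.sum_add_distrib, ← Finset.mul_sum, ← Finset.mul_sum]
  have hq : ∑ i : Fin N, (η.1 i ^ 2 + η.2.1 i ^ 2) = qf η := by
    rw [Finset.sum_add_distrib]; rfl
  rw [hq, ← Finset.mul_sum, key_sum]
  have hpow : uf η ^ (-(7:ℝ)/4) * uf η = uf η ^ (-(3:ℝ)/4) := by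
    nth_rewrite 2 [show uf η = uf η ^ (1:ℝ) by rw [Real.rpow_one]]
    rw [← Real.rpow_add hu]; norm_num
  have hLHS : 2 * uf η ^ (-(3:ℝ)/4) * (∑ _i : Fin N, qf η)
      + 4 * uf η ^ (-(3:ℝ)/4) * qf η
      - 3 * uf η ^ (-(7:ℝ)/4) * (uf η * qf η)
      = (2 * N + 1) * qf η * uf η ^ (-(3:ℝ)/4) := by
    rw [Finset.sum_const, Finset.card_univ, Fintype.card_fin, nsmul_eq_mul]
    have : 3 * uf η ^ (-(7:ℝ)/4) * (uf η * qf η)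
        = 3 * uf η ^ (-(3:ℝ)/4) * qf η := by
      rw [← mul_assoc, mul_assoc (3:ℝ), hpow]
    rw [this]; ring
  rw [hLHS]
  have hρ3 : hnorm η * hnorm η ^ 2 = uf η ^ ((3:ℝ)/4) := by
    rw [hρ, ← Real.rpow_natCast (uf η ^ ((1:ℝ)/4)) 2, ← Real.rpow_mul hu.le,
      ← Real.rpow_add hu]
    norm_num
  have hneg : uf η ^ (-(3:ℝ)/4) = (uf η ^ ((3:ℝ)/4))⁻¹ := by
    rw [show (-(3:ℝ)/4) = -((3:ℝ)/4) by norm_num, Real.rpow_neg hu.le]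
  have hq' : sqnorm η.1 + sqnorm η.2.1 = qf η := rfl
  rw [hq', hneg]
  rw [div_mul_div_comm, hρ3, div_eq_mul_inv]
  ring
end SubLapAux
end


/-- `Δ_H ρ = (Q-1)/ρ · Ψ(η)` with `Q = 2N+2` and `Ψ = (|x|²+|y|²)/ρ²`, for `η ≠ 0`. -/
theorem subLap_hnorm {N : ℕ} (η : H N) (hη : η ≠ 0) :
    subLap hnorm η =
      ((2 * N + 2 : ℝ) - 1) / hnorm η * ((sqnorm η.1 + sqnorm η.2.1) / (hnorm η) ^ 2) := by
  exact SubLapAux.subLap_hnorm' η hη
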